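/- If A := (1/n²)·tr(M) for a symmetric positive semidefinite n×n matrix M and μ₁ denotes the strong convexity constant of f(x) = (1/2)xᵀMx − bᵀx in the ℓ₁-norm, then μ₁ ≤ (1/n²)tr(M) ≤ (1/n)·max_{i,j}|M_{ij}|, and since the Lipschitz constant of ∇f in the ℓ₁-norm is L₁ = max_{i,j}|M_{ij}|, the condition number satisfies L₁/μ₁ ≥ n. -/

import Mathlib

open Matrix Finset

noncomputable def sgn (b : Bool) : ℝ := if b then 1 else -1

lemma sgn_sq (b : Bool) : sgn b * sgn b = 1 := by cases b <;> simp [sgn]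

lemma sgn_abs (b : Bool) : |sgn b| = 1 := by cases b <;> simp [sgn]

lemma key (n : ℕ) (i j : Fin n) :
    ∑ σ : Fin n → Bool, sgn (σ i) * sgn (σ j)
      = if i = j then (2 ^ n : ℝ) else 0 := by
  by_cases h : i = j
  · subst h
    simp [sgn_sq, Finset.card_univ]
  · simp only [h, if_false]
    apply Finset.sum_ninvolution (fun σ => Function.update σ i (!σ i))
    · intro σ
      cases hi : σ i <;> cases hj : σ j <;>
        simp [sgn, Function.update_self, Function.update_of_ne (Ne.symm h), hi, hj]
    · intro σ _
      intro hc
      have := congrArg (fun f => f i) hc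
      simp at this
    · intro σ; exact Finset.mem_univ _
    · intro σ
      funext k
      by_cases hk : k = i
      · subst hk; simp
      · simp [Function.update_of_ne hk]

theorem stmt13 (n : ℕ) (hn : 0 < n) (M : Matrix (Fin n) (Fin n) ℝ)
    (hsymm : M.IsSymm) (hpsd : M.PosSemidef)
    (μ1 L1 : ℝ) (hμpos : 0 < μ1)
    (hμ : ∀ v : Fin n → ℝ, (∑ i, |v i|) = 1 → μ1 ≤ v ⬝ᵥ M.mulVec v)
    (hL : ∀ i j, |M i j| ≤ L1) :
    μ1 ≤ (1 / (n : ℝ) ^ 2) * M.trace ∧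
    (1 / (n : ℝ) ^ 2) * M.trace ≤ (1 / (n : ℝ)) * L1 ∧
    (n : ℝ) ≤ L1 / μ1 := by
  have hn' : (0 : ℝ) < n := by exact_mod_cast hn
  -- vectors
  set v : (Fin n → Bool) → (Fin n → ℝ) := fun σ i => sgn (σ i) / n with hv
  have hnorm : ∀ σ, (∑ i, |v σ i|) = 1 := by
    intro σ
    simp only [hv, abs_div, sgn_abs, abs_of_pos hn']
    rw [Finset.sum_const, Finset.card_univ, Fintype.card_fin]
    rw [nsmul_eq_mul]; field_simp
  have hq : ∀ σ, μ1 ≤ v σ ⬝ᵥ M.mulVec (v σ) := fun σ => hμ _ (hnorm σ)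
  -- sum over all σ
  have hsum : ∑ σ : Fin n → Bool, (v σ ⬝ᵥ M.mulVec (v σ))
      = (2 ^ n : ℝ) * ((1 / (n : ℝ) ^ 2) * M.trace) := by
    have expand : ∀ σ, v σ ⬝ᵥ M.mulVec (v σ)
        = ∑ i, ∑ j, (M i j / n ^ 2) * (sgn (σ i) * sgn (σ j)) := by
      intro σ
      simp only [dotProduct, mulVec, Finset.mul_sum, hv]
      refine Finset.sum_congr rfl fun i _ => Finset.sum_congr rfl fun j _ => ?_
      field_simp
    simp only [expand]
    rw [show (∑ σ : Fin n → Bool, ∑ i, ∑ j, (M i j / n ^ 2) * (sgn (σ i) * sgn (σ j)))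
        = ∑ i, ∑ j, (M i j / n ^ 2) * ∑ σ : Fin n → Bool, (sgn (σ i) * sgn (σ j)) by
      rw [Finset.sum_comm]
      refine Finset.sum_congr rfl fun i _ => ?_
      rw [Finset.sum_comm]
      refine Finset.sum_congr rfl fun j _ => ?_
      rw [Finset.mul_sum]]
    simp only [key]
    simp only [mul_ite, mul_zero, Finset.sum_ite_eq, Finset.mem_univ, if_true]
    unfold Matrix.trace Matrix.diag
    simp only [div_mul_eq_mul_div, ← Finset.sum_div, ← Finset.sum_mul]
    ring
  have card2 : (0:ℝ) < 2 ^ n := by positivity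
  have h1 : μ1 ≤ (1 / (n : ℝ) ^ 2) * M.trace := by
    have : (2 ^ n : ℝ) * μ1 ≤ (2 ^ n : ℝ) * ((1 / (n : ℝ) ^ 2) * M.trace) := by
      rw [← hsum]
      calc (2 ^ n : ℝ) * μ1 = ∑ _σ : Fin n → Bool, μ1 := by
            simp [Finset.card_univ, mul_comm]
        _ ≤ _ := Finset.sum_le_sum fun σ _ => hq σ
    exact le_of_mul_le_mul_left this card2
  have h2 : (1 / (n : ℝ) ^ 2) * M.trace ≤ (1 / (n : ℝ)) * L1 := by
    have htr : M.trace ≤ n * L1 := by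
      unfold Matrix.trace Matrix.diag
      calc (∑ i, M i i) ≤ ∑ i : Fin n, L1 :=
            Finset.sum_le_sum fun i _ => (le_abs_self _).trans (hL i i)
        _ = n * L1 := by simp [Finset.card_univ, mul_comm]
    rw [div_mul_eq_mul_div, div_mul_eq_mul_div, one_mul, one_mul, div_le_div_iff₀ (by positivity) hn']
    calc M.trace * n ≤ (n * L1) * n := by nlinarith [sq_nonneg ((n:ℝ))]
      _ = L1 * n ^ 2 := by ring
  refine ⟨h1, h2, ?_⟩
  have h3 : μ1 * n ≤ L1 := by
    have := h1.trans h2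
    rw [div_mul_eq_mul_div, one_mul] at this
    calc μ1 * n ≤ (L1 / n) * n := by nlinarith
      _ = L1 := by field_simp
  rw [le_div_iff₀ hμpos]
  linarith
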